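/- Inserting a new point p into a finite set S moves each existing point by at most one layer: if q is in layer i of S, then q lies in layer i or layer i+1 of S ∪ {p}. -/
import Mathlib


open scoped Classical

/-- `p` dominates `q`. -/
def dom (p q : ℝ × ℝ) : Prop :=
  (p.1 ≤ q.1 ∧ p.2 < q.2) ∨ (p.1 < q.1 ∧ p.2 ≤ q.2)

/-- Dominance score of `p` in `S`. -/
noncomputable def score (S : Finset (ℝ × ℝ)) (p : ℝ × ℝ) : ℕ :=
  (S.filter (fun q => dom p q)).card

/-- Maxima of `S`: points dominated by no point of `S`. -/
noncomputable def maxima (S : Finset (ℝ × ℝ)) : Finset (ℝ × ℝ) :=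
  S.filter (fun p => ∀ q ∈ S, ¬ dom q p)

/-- Points remaining after removing the first `i` layers of maxima. -/
noncomputable def rest (S : Finset (ℝ × ℝ)) : ℕ → Finset (ℝ × ℝ)
  | 0 => S
  | i + 1 => rest S i \ maxima (rest S i)

/-- The `i`-th layer of maxima (layers indexed from 1). -/
noncomputable def layer (S : Finset (ℝ × ℝ)) (i : ℕ) : Finset (ℝ × ℝ) :=
  maxima (rest S (i - 1))

/-- There is a dominance chain of length `j` in `S` starting at `p`
(each next element dominates the previous). -/
def IsChainFrom (S : Finset (ℝ × ℝ)) (p : ℝ × ℝ) (j : ℕ) : Prop :=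
  ∃ f : ℕ → ℝ × ℝ, f 0 = p ∧ (∀ t, t < j → f t ∈ S) ∧
    ∀ t, t + 1 < j → dom (f (t + 1)) (f t)
lemma dom_irrefl (q : ℝ × ℝ) : ¬ dom q q := by
  rintro (⟨h1, h2⟩ | ⟨h1, h2⟩) <;> linarith

lemma dom_trans {a b c : ℝ × ℝ} (hab : dom a b) (hbc : dom b c) : dom a c := by
  rcases hab with ⟨h1, h2⟩ | ⟨h1, h2⟩ <;> rcases hbc with ⟨h3, h4⟩ | ⟨h3, h4⟩ <;>
    first
      | (left; constructor <;> linarith)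
      | (right; constructor <;> linarith)

lemma chain_step {f : ℕ → ℝ × ℝ} {j : ℕ} (hf : ∀ t, t + 1 < j → dom (f (t + 1)) (f t)) :
    ∀ a b, a < b → b < j → dom (f b) (f a) := by
  intro a b
  induction b with
  | zero => omega
  | succ b ih =>
    intro hab hbj
    rcases Nat.lt_succ_iff_lt_or_eq.mp hab with h | h
    · exact dom_trans (hf b hbj) (ih h (by omega))
    · subst h; exact hf a hbj

lemma chain_mono_len {S : Finset (ℝ × ℝ)} {q : ℝ × ℝ} {j j' : ℕ} (h : j' ≤ j)
    (hc : IsChainFrom S q j) : IsChainFrom S q j' := by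
  obtain ⟨f, h0, hm, hc⟩ := hc
  exact ⟨f, h0, fun t ht => hm t (by omega), fun t ht => hc t (by omega)⟩

lemma chain_mono_set {S T : Finset (ℝ × ℝ)} {q : ℝ × ℝ} {j : ℕ} (h : S ⊆ T)
    (hc : IsChainFrom S q j) : IsChainFrom T q j := by
  obtain ⟨f, h0, hm, hc⟩ := hc
  exact ⟨f, h0, fun t ht => h (hm t ht), hc⟩

lemma chain_one {S : Finset (ℝ × ℝ)} {q : ℝ × ℝ} : IsChainFrom S q 1 ↔ q ∈ S := by
  constructor
  · rintro ⟨f, h0, hm, _⟩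
    have := hm 0 (by omega); rwa [h0] at this
  · intro h
    exact ⟨fun _ => q, rfl, fun t ht => h, fun t ht => by omega⟩

lemma chain_mem {S : Finset (ℝ × ℝ)} {q : ℝ × ℝ} {j : ℕ} (hj : 1 ≤ j)
    (h : IsChainFrom S q j) : q ∈ S :=
  chain_one.mp (chain_mono_len hj h)

lemma chain_prepend {S : Finset (ℝ × ℝ)} {q r : ℝ × ℝ} {j : ℕ}
    (hq : q ∈ S) (hd : dom r q) (h : IsChainFrom S r j) :
    IsChainFrom S q (j + 1) := by
  obtain ⟨f, h0, hm, hc⟩ := h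
  refine ⟨fun t => if t = 0 then q else f (t - 1), by simp, ?_, ?_⟩
  · intro t ht
    by_cases h0t : t = 0
    · simp [h0t, hq]
    · simp only [h0t, if_false]
      exact hm (t - 1) (by omega)
  · intro t ht
    by_cases h0t : t = 0
    · subst h0t; simpa [h0] using hd
    · have h1 : (t : ℕ) + 1 ≠ 0 := by omega
      simp only [h1, h0t, if_false, Nat.add_sub_cancel]
      have := hc (t - 1) (by omega)
      rwa [Nat.sub_add_cancel (by omega)] at this

lemma chain_tail {S : Finset (ℝ × ℝ)} {q : ℝ × ℝ} {j : ℕ} (hj : 1 ≤ j)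
    (h : IsChainFrom S q (j + 1)) : ∃ r, dom r q ∧ IsChainFrom S r j := by
  obtain ⟨f, h0, hm, hc⟩ := h
  refine ⟨f 1, by rw [← h0]; exact hc 0 (by omega), fun t => f (t + 1), rfl,
    fun t ht => hm (t + 1) (by omega), fun t ht => hc (t + 1) (by omega)⟩

lemma rest_subset (S : Finset (ℝ × ℝ)) (k : ℕ) : rest S k ⊆ S := by
  induction k with
  | zero => exact Finset.Subset.refl S
  | succ k ih => exact (Finset.sdiff_subset).trans ih

lemma rest_mem_iff (S : Finset (ℝ × ℝ)) (k : ℕ) :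
    ∀ q, q ∈ rest S k ↔ IsChainFrom S q (k + 1) := by
  induction k with
  | zero => intro q; simp [rest, chain_one]
  | succ k ih =>
    intro q
    show q ∈ rest S k \ maxima (rest S k) ↔ _
    rw [Finset.mem_sdiff]
    constructor
    · rintro ⟨hq, hq2⟩
      rw [maxima, Finset.mem_filter] at hq2
      push_neg at hq2
      obtain ⟨r, hr, hdr⟩ := hq2 hq
      exact chain_prepend (rest_subset S k hq) hdr ((ih r).mp hr)
    · intro h
      have hq : q ∈ rest S k := (ih q).mpr (chain_mono_len (by omega) h)
      refine ⟨hq, ?_⟩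
      obtain ⟨r, hdr, hcr⟩ := chain_tail (by omega) h
      rw [maxima, Finset.mem_filter]
      push_neg
      intro _
      exact ⟨r, (ih r).mpr hcr, hdr⟩

lemma layer_mem_iff {S : Finset (ℝ × ℝ)} {q : ℝ × ℝ} {i : ℕ} (hi : 1 ≤ i) :
    q ∈ layer S i ↔ IsChainFrom S q i ∧ ¬ IsChainFrom S q (i + 1) := by
  rw [layer, maxima, Finset.mem_filter]
  have hrw : q ∈ rest S (i - 1) ↔ IsChainFrom S q i := by
    rw [rest_mem_iff, Nat.sub_add_cancel hi]
  constructor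
  · rintro ⟨hq, hmax⟩
    refine ⟨hrw.mp hq, fun hc => ?_⟩
    obtain ⟨r, hdr, hcr⟩ := chain_tail hi hc
    exact hmax r ((rest_mem_iff S (i-1) r).mpr (by rwa [Nat.sub_add_cancel hi])) hdr
  · rintro ⟨hc, hnc⟩
    refine ⟨hrw.mpr hc, fun r hr hdr => ?_⟩
    have hcr : IsChainFrom S r i := by
      have := (rest_mem_iff S (i-1) r).mp hr
      rwa [Nat.sub_add_cancel hi] at this
    exact hnc (chain_prepend (chain_mem hi hc) hdr hcr)

lemma chain_remove {S : Finset (ℝ × ℝ)} {p q : ℝ × ℝ} {j : ℕ}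
    (hp : p ∉ S) (hq : q ∈ S) (h : IsChainFrom (insert p S) q (j + 1)) :
    IsChainFrom S q j := by
  obtain ⟨f, h0, hm, hc⟩ := h
  by_cases hall : ∀ t, t < j + 1 → f t ≠ p
  · exact chain_mono_len (by omega) ⟨f, h0, fun t ht => by
      have := hm t ht
      rcases Finset.mem_insert.mp this with h' | h'
      · exact absurd h' (hall t ht)
      · exact h', hc⟩
  · push_neg at hall
    obtain ⟨t, htj, htp⟩ := hall
    have ht0 : t ≠ 0 := by
      intro h'; rw [h', h0] at htp; exact hp (htp ▸ hq)
    have huniq : ∀ s, s < j + 1 → s ≠ t → f s ≠ p := by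
      intro s hs hst hsp
      rcases Nat.lt_or_ge s t with h' | h'
      · have hd := chain_step hc s t h' htj
        rw [htp, hsp] at hd
        exact dom_irrefl p hd
      · have hd := chain_step hc t s (by omega) hs
        rw [htp, hsp] at hd
        exact dom_irrefl p hd
    refine ⟨fun s => if s < t then f s else f (s + 1), ?_, ?_, ?_⟩
    · simp [Nat.pos_of_ne_zero ht0, h0]
    · intro s hs
      by_cases h' : s < t
      · simp only [h', if_true]
        rcases Finset.mem_insert.mp (hm s (by omega)) with h'' | h''
        · exact absurd h'' (huniq s (by omega) (by omega))
        · exact h''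
      · simp only [h', if_false]
        rcases Finset.mem_insert.mp (hm (s + 1) (by omega)) with h'' | h''
        · exact absurd h'' (huniq (s + 1) (by omega) (by omega))
        · exact h''
    · intro s hs
      by_cases h1 : s + 1 < t
      · simp only [h1, show s < t by omega, if_true]
        exact hc s (by omega)
      · by_cases h2 : s < t
        · -- s + 1 = t
          have hst : s + 1 = t := by omega
          simp only [h1, h2, if_true, if_false]
          exact chain_step hc s (s + 2) (by omega) (by omega)
        · simp only [h1, h2, if_false]
          exact hc (s + 1) (by omega)

theorem insert_moves_at_most_one_layer (S : Finset (ℝ × ℝ)) (p : ℝ × ℝ)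
    (hp : p ∉ S) (i : ℕ) (hi : 1 ≤ i) (q : ℝ × ℝ) (hq : q ∈ layer S i) :
    q ∈ layer (insert p S) i ∨ q ∈ layer (insert p S) (i + 1) := by
  obtain ⟨h1, h2⟩ := (layer_mem_iff hi).mp hq
  have hqS : q ∈ S := chain_mem hi h1
  have hins1 : IsChainFrom (insert p S) q i :=
    chain_mono_set (Finset.subset_insert p S) h1
  have hnot2 : ¬ IsChainFrom (insert p S) q (i + 2) := fun h =>
    h2 (chain_remove hp hqS h)
  by_cases hc : IsChainFrom (insert p S) q (i + 1)
  · exact Or.inr ((layer_mem_iff (by omega)).mpr ⟨hc, hnot2⟩)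
  · exact Or.inl ((layer_mem_iff hi).mpr ⟨hins1, hc⟩)
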